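/- Let u, v : ℤ → {0,1} be bi-infinite binary words. Then for all integers p ≤ q the number of indices i with p ≤ i ≤ q and u(i) = 0 differs from the number of indices i with p ≤ i ≤ q and v(i) = 0 by at most 1, if and only if the positions where u and v differ have alternating types, i.e., for every pair of integers i < j with u(i) ≠ v(i), u(j) ≠ v(j), and u(k) = v(k) for all k with i < k < j, one has u(i) ≠ u(j). -/

import Mathlib

/-- Bi-infinite binary words are functions `ℤ → Bool`, where `false` stands for the
letter 0 and `true` for the letter 1.  `zeroCount u p q` is the number of indices
`i` with `p ≤ i ≤ q` and `u i = 0`, as an integer. -/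
noncomputable def zeroCount (u : ℤ → Bool) (p q : ℤ) : ℤ :=
  ((Finset.Icc p q).filter (fun i => u i = false)).card

/-- The local balance of `u` against `v` at position `i`. -/
def dd (u v : ℤ → Bool) (i : ℤ) : ℤ :=
  (if u i = false then 1 else 0) - (if v i = false then 1 else 0)

lemma dd_eq_zero_iff (u v : ℤ → Bool) (i : ℤ) : dd u v i = 0 ↔ u i = v i := by
  cases h1 : u i <;> cases h2 : v i <;> simp [dd, h1, h2]

lemma abs_dd_le_one (u v : ℤ → Bool) (i : ℤ) : |dd u v i| ≤ 1 := by
  cases h1 : u i <;> cases h2 : v i <;> simp [dd, h1, h2]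

lemma dd_add_eq_zero (u v : ℤ → Bool) (i j : ℤ) (hi : u i ≠ v i) (hj : u j ≠ v j)
    (h : u i ≠ u j) : dd u v i + dd u v j = 0 := by
  cases h1 : u i <;> cases h2 : v i <;> cases h3 : u j <;> cases h4 : v j <;>
    simp_all [dd]

lemma dd_eq_dd (u v : ℤ → Bool) (i j : ℤ) (hi : u i ≠ v i) (hj : u j ≠ v j)
    (h : u i = u j) : dd u v i = dd u v j := by
  cases h1 : u i <;> cases h2 : v i <;> cases h3 : u j <;> cases h4 : v j <;>
    simp_all [dd]

lemma dd_sum (u v : ℤ → Bool) (p q : ℤ) :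
    zeroCount u p q - zeroCount v p q = ∑ i ∈ Finset.Icc p q, dd u v i := by
  unfold zeroCount dd
  rw [Finset.card_filter, Finset.card_filter]
  push_cast
  rw [← Finset.sum_sub_distrib]

lemma Icc_succ_top (p q : ℤ) (h : p ≤ q + 1) :
    Finset.Icc p (q + 1) = insert (q + 1) (Finset.Icc p q) := by
  ext k
  simp only [Finset.mem_Icc, Finset.mem_insert]
  omega

/-- Two bi-infinite binary words are at distance at most one (their balance over every
common finite window is at most 1) if and only if the positions where they differ have
alternating types. -/
theorem balance_le_one_iff_alternating (u v : ℤ → Bool) :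
    (∀ p q : ℤ, p ≤ q → |zeroCount u p q - zeroCount v p q| ≤ 1) ↔
    (∀ i j : ℤ, i < j → u i ≠ v i → u j ≠ v j →
      (∀ k : ℤ, i < k → k < j → u k = v k) → u i ≠ u j) := by
  constructor
  · intro H i j hij hi hj hmid hcontra
    have hS : zeroCount u i j - zeroCount v i j = dd u v i + dd u v j := by
      rw [dd_sum]
      have hmem : i ∈ Finset.Icc i j := by simp [Finset.mem_Icc]; omega
      rw [← Finset.add_sum_erase _ _ hmem]
      congr 1
      refine Finset.sum_eq_single_of_mem j ?_ ?_
      · simp [Finset.mem_erase, Finset.mem_Icc]; omega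
      · intro k hk hkj
        simp only [Finset.mem_erase, Finset.mem_Icc] at hk
        exact (dd_eq_zero_iff u v k).mpr (hmid k (by omega) (by omega))
    have h2 : dd u v i = dd u v j := dd_eq_dd u v i j hi hj hcontra
    have habs : |dd u v i| = 1 := by
      cases h1 : u i <;> cases h2 : v i <;> simp_all [dd]
    have := H i j (le_of_lt hij)
    rw [hS, ← h2] at this
    rcases abs_eq (by norm_num : (0:ℤ) ≤ 1) |>.mp habs with h | h <;>
      rw [h] at this <;> norm_num at this
  · intro A p q hpq
    rw [dd_sum]
    -- invariant by induction on q
    have key : ∀ q' : ℤ, p - 1 ≤ q' →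
        (∑ i ∈ Finset.Icc p q', dd u v i = 0 ∨
          ∃ m, p ≤ m ∧ m ≤ q' ∧ dd u v m ≠ 0 ∧
            (∀ k, m < k → k ≤ q' → dd u v k = 0) ∧
            ∑ i ∈ Finset.Icc p q', dd u v i = dd u v m) := by
      refine Int.le_induction ?_ ?_
        (motive := fun q' _ => ∑ i ∈ Finset.Icc p q', dd u v i = 0 ∨
          ∃ m, p ≤ m ∧ m ≤ q' ∧ dd u v m ≠ 0 ∧
            (∀ k, m < k → k ≤ q' → dd u v k = 0) ∧
            ∑ i ∈ Finset.Icc p q', dd u v i = dd u v m)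
      · left
        rw [Finset.Icc_eq_empty (by omega)]
        simp
      · intro n hn IH
        have hsum : ∑ i ∈ Finset.Icc p (n + 1), dd u v i =
            dd u v (n + 1) + ∑ i ∈ Finset.Icc p n, dd u v i := by
          rw [Icc_succ_top p n (by omega), Finset.sum_insert (by simp [Finset.mem_Icc])]
        by_cases hd : dd u v (n + 1) = 0
        · rcases IH with h0 | ⟨m, hm1, hm2, hm3, hm4, hm5⟩
          · left; rw [hsum, h0, hd]; ring
          · right
            refine ⟨m, hm1, by omega, hm3, ?_, by rw [hsum, hd, hm5]; ring⟩
            intro k hk1 hk2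
            rcases eq_or_lt_of_le hk2 with h | h
            · rw [h]; exact hd
            · exact hm4 k hk1 (by omega)
        · rcases IH with h0 | ⟨m, hm1, hm2, hm3, hm4, hm5⟩
          · right
            exact ⟨n + 1, by omega, le_refl _, hd, fun k hk1 hk2 => by omega,
              by rw [hsum, h0]; ring⟩
          · left
            have hum : u m ≠ v m := fun h => hm3 ((dd_eq_zero_iff u v m).mpr h)
            have hun : u (n + 1) ≠ v (n + 1) := fun h => hd ((dd_eq_zero_iff u v (n+1)).mpr h)
            have halt : u m ≠ u (n + 1) := by
              refine A m (n + 1) (by omega) hum hun ?_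
              intro k hk1 hk2
              exact (dd_eq_zero_iff u v k).mp (hm4 k hk1 (by omega))
            have : dd u v m + dd u v (n + 1) = 0 :=
              dd_add_eq_zero u v m (n + 1) hum hun halt
            rw [hsum, hm5]
            omega
    rcases key q (by omega) with h | ⟨m, _, _, _, _, h⟩
    · rw [h]; norm_num
    · rw [h]; exact abs_dd_le_one u v m
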